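/- Let N ≥ 1, let u ∈ ℂ^N be a unit vector, and let P be an N×N complex matrix with P† = P and P² = P (an orthogonal projection). Let p = ⟨u, Pu⟩, a real number in [0,1]. Then the trace norm satisfies ‖(Pu)(Pu)† − u u†‖₁ = √((1−p)(1+3p)); in particular, the trace distance ½‖(Pu)(Pu)† − u u†‖₁ is at most √(1−p). -/

import Mathlib

open Matrix Finset
open scoped ComplexOrder

noncomputable section

/-- The rank-one matrix `v v†`. -/
def outer {I : Type*} (v : I → ℂ) : Matrix I I ℂ :=
  Matrix.of fun a b => v a * (starRingEnd ℂ) (v b)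

/-- The trace norm `‖X‖₁ = tr √(X† X)`. -/
def traceNorm {I : Type*} [Fintype I] [DecidableEq I] (X : Matrix I I ℂ) : ℝ :=
  (((Matrix.posSemidef_conjTranspose_mul_self X).1.eigenvectorUnitary : Matrix I I ℂ) *
    diagonal (((↑) : ℝ → ℂ) ∘ (√·) ∘ (Matrix.posSemidef_conjTranspose_mul_self X).1.eigenvalues) *
    (star (Matrix.posSemidef_conjTranspose_mul_self X).1.eigenvectorUnitary : Matrix I I ℂ)).trace.re

/-- Trace distance. -/
def traceDist {I : Type*} [Fintype I] [DecidableEq I] (ρ σ : Matrix I I ℂ) : ℝ :=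
  traceNorm (ρ - σ) / 2

open scoped MatrixOrder in
lemma traceNorm_eq_of {I : Type*} [Fintype I] [DecidableEq I] (X S : Matrix I I ℂ)
    (hS : S.PosSemidef) (hSS : S * S = Xᴴ * X) : traceNorm X = S.trace.re := by
  have h1 : ((Matrix.posSemidef_conjTranspose_mul_self X).1.eigenvectorUnitary : Matrix I I ℂ) *
    diagonal (((↑) : ℝ → ℂ) ∘ (√·) ∘ (Matrix.posSemidef_conjTranspose_mul_self X).1.eigenvalues) *
    (star (Matrix.posSemidef_conjTranspose_mul_self X).1.eigenvectorUnitary : Matrix I I ℂ)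
      = cfc Real.sqrt (Xᴴ * X) := by
    rw [(Matrix.posSemidef_conjTranspose_mul_self X).1.cfc_eq]
    simp [IsHermitian.cfc]
  have h2 : cfc Real.sqrt (Xᴴ * X) = S := by
    rw [← cfcₙ_eq_cfc, ← CFC.sqrt_eq_real_sqrt _ (Matrix.posSemidef_conjTranspose_mul_self X).nonneg]
    exact CFC.sqrt_unique hSS hS.nonneg
  rw [traceNorm, h1, h2]

def op {I : Type*} (a b : I → ℂ) : Matrix I I ℂ :=
  Matrix.of fun i j => a i * (starRingEnd ℂ) (b j)

lemma op_mul_op {I : Type*} [Fintype I] (a b c d : I → ℂ) :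
    op a b * op c d = (star b ⬝ᵥ c) • op a d := by
  ext i j
  simp only [op, Matrix.mul_apply, Matrix.of_apply, Matrix.smul_apply, dotProduct,
    Finset.sum_mul, smul_eq_mul, Pi.star_apply, RCLike.star_def]
  exact Finset.sum_congr rfl fun k _ => by ring

lemma op_mulVec {I : Type*} [Fintype I] (a b x : I → ℂ) :
    (op a b) *ᵥ x = (star b ⬝ᵥ x) • a := by
  ext i
  simp only [op, Matrix.mulVec, dotProduct, Matrix.of_apply, Pi.smul_apply, smul_eq_mul,
    Pi.star_apply, RCLike.star_def, Finset.sum_mul]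
  exact Finset.sum_congr rfl fun k _ => by ring

lemma trace_op {I : Type*} [Fintype I] (a b : I → ℂ) :
    (op a b).trace = star b ⬝ᵥ a := by
  simp only [Matrix.trace, Matrix.diag, op, Matrix.of_apply, dotProduct, Pi.star_apply,
    RCLike.star_def]
  exact Finset.sum_congr rfl fun k _ => by ring

lemma conjTranspose_op {I : Type*} (a b : I → ℂ) : (op a b)ᴴ = op b a := by
  ext i j
  simp [op, Matrix.conjTranspose_apply, mul_comm]

lemma star_dot_comm {I : Type*} [Fintype I] (a x : I → ℂ) :
    star x ⬝ᵥ a = (starRingEnd ℂ) (star a ⬝ᵥ x) := by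
  simp only [dotProduct, map_sum, Pi.star_apply, RCLike.star_def]
  exact Finset.sum_congr rfl fun k _ => by
    simp only [_root_.map_mul, Complex.conj_conj]; ring

lemma star_dot_self {I : Type*} [Fintype I] (w : I → ℂ) :
    star w ⬝ᵥ w = ((∑ i, Complex.normSq (w i) : ℝ) : ℂ) := by
  push_cast
  simp only [dotProduct, Pi.star_apply, RCLike.star_def]
  exact Finset.sum_congr rfl fun k _ => by rw [mul_comm, Complex.mul_conj]

lemma quad_nonneg (p : ℝ) (hp0 : 0 ≤ p) (hp1 : p ≤ 1) (A B : ℂ) :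
    0 ≤ (1 + (p:ℂ)) * ((starRingEnd ℂ) A * A + (starRingEnd ℂ) B * B)
      - 2 * p * ((starRingEnd ℂ) B * A + (starRingEnd ℂ) A * B) := by
  have h : (1 + (p:ℂ)) * ((starRingEnd ℂ) A * A + (starRingEnd ℂ) B * B)
      - 2 * p * ((starRingEnd ℂ) B * A + (starRingEnd ℂ) A * B)
      = (((1 - p) * (Complex.normSq A + Complex.normSq B)
          + 2 * p * Complex.normSq (A - B) : ℝ) : ℂ) := by
    have hA : ((Complex.normSq A : ℝ) : ℂ) = (starRingEnd ℂ) A * A := by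
      rw [mul_comm, Complex.mul_conj]
    have hB : ((Complex.normSq B : ℝ) : ℂ) = (starRingEnd ℂ) B * B := by
      rw [mul_comm, Complex.mul_conj]
    have hAB : ((Complex.normSq (A - B) : ℝ) : ℂ) = (starRingEnd ℂ) (A - B) * (A - B) := by
      rw [mul_comm, Complex.mul_conj]
    push_cast [hA, hB, hAB, _root_.map_sub]
    ring
  rw [h, Complex.zero_le_real]
  nlinarith [Complex.normSq_nonneg A, Complex.normSq_nonneg B, Complex.normSq_nonneg (A - B)]

/-- For a unit vector `u` and an orthogonal projection `P`, with
`p = ⟨u, Pu⟩`, one has `‖(Pu)(Pu)† − uu†‖₁ = √((1−p)(1+3p))`, so the trace distance between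
`(Pu)(Pu)†` and `uu†` is at most `√(1−p)`. -/
theorem projected_state_trace_dist (N : ℕ) (hN : 1 ≤ N) (u : Fin N → ℂ)
    (hu : ∑ x, ‖u x‖ ^ 2 = 1)
    (P : Matrix (Fin N) (Fin N) ℂ) (hP : Pᴴ = P) (hP2 : P * P = P) :
    traceNorm (outer (P.mulVec u) - outer u)
        = Real.sqrt ((1 - (star u ⬝ᵥ P.mulVec u).re) * (1 + 3 * (star u ⬝ᵥ P.mulVec u).re)) ∧
      traceDist (outer (P.mulVec u)) (outer u)
        ≤ Real.sqrt (1 - (star u ⬝ᵥ P.mulVec u).re) := by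
  classical
  set v : Fin N → ℂ := P.mulVec u with hv
  set p : ℝ := (star u ⬝ᵥ v).re with hpdef
  have houter : ∀ w : Fin N → ℂ, outer w = op w w := fun _ => rfl
  have hPv : P *ᵥ v = v := by rw [hv, Matrix.mulVec_mulVec, hP2]
  have hvv_uv : star v ⬝ᵥ v = star u ⬝ᵥ v := by
    calc star v ⬝ᵥ v = star (P *ᵥ u) ⬝ᵥ v := rfl
    _ = (star u ᵥ* Pᴴ) ⬝ᵥ v := by rw [Matrix.star_mulVec]
    _ = star u ⬝ᵥ (Pᴴ *ᵥ v) := (Matrix.dotProduct_mulVec _ _ _).symm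
    _ = star u ⬝ᵥ v := by rw [hP, hPv]
  have h1 : star u ⬝ᵥ v = ((∑ i, Complex.normSq (v i) : ℝ) : ℂ) := by
    rw [← hvv_uv, star_dot_self]
  have hq : star u ⬝ᵥ v = (p : ℂ) := by rw [hpdef, h1]; simp
  have hvu : star v ⬝ᵥ u = (p : ℂ) := by
    rw [star_dot_comm u v, hq, Complex.conj_ofReal]
  have hvv : star v ⬝ᵥ v = (p : ℂ) := by rw [hvv_uv, hq]
  have huu : star u ⬝ᵥ u = 1 := by
    rw [star_dot_self]
    norm_cast
    rw [← hu]
    exact Finset.sum_congr rfl fun i _ => by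
      rw [Complex.normSq_eq_norm_sq]
  have hp0 : 0 ≤ p := by
    rw [hpdef, h1]
    simpa using Finset.sum_nonneg fun i _ => Complex.normSq_nonneg (v i)
  have hum : ((1 - p : ℝ) : ℂ) = ((∑ i, Complex.normSq ((u - v) i) : ℝ) : ℂ) := by
    rw [← star_dot_self]
    simp only [star_sub, sub_dotProduct, dotProduct_sub, huu, hq, hvu, hvv]
    push_cast
    ring
  have hum' : (1 - p : ℝ) = ∑ i, Complex.normSq ((u - v) i) := by exact_mod_cast hum
  have hp1 : p ≤ 1 := by
    nlinarith [hum' ▸ Finset.sum_nonneg fun i (_ : i ∈ Finset.univ) => Complex.normSq_nonneg ((u - v) i)]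
  rcases eq_or_lt_of_le hp1 with hp1' | hp1'
  · -- p = 1 : u = v, X = 0
    have huv : u = v := by
      have hz : ∑ i, Complex.normSq ((u - v) i) = 0 := by rw [← hum', ← hp1']; ring
      have := (Finset.sum_eq_zero_iff_of_nonneg
        (fun i _ => Complex.normSq_nonneg ((u - v) i))).mp hz
      funext i
      have h0 : Complex.normSq ((u - v) i) = 0 := this i (Finset.mem_univ i)
      have : (u - v) i = 0 := Complex.normSq_eq_zero.mp h0
      simpa [sub_eq_zero] using this
    have hX0 : outer v - outer u = 0 := by rw [huv]; simp
    have htn0 : traceNorm (outer v - outer u) = 0 := by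
      rw [hX0]
      rw [traceNorm_eq_of (0 : Matrix (Fin N) (Fin N) ℂ) 0 Matrix.PosSemidef.zero (by simp)]
      simp
    constructor
    · rw [htn0, ← hp1']
      norm_num
    · rw [traceDist, htn0]
      simpa using Real.sqrt_nonneg (1 - p)
  · -- p < 1
    set s : ℝ := Real.sqrt ((1 - p) * (1 + 3 * p)) with hsdef
    have hfac : (0:ℝ) ≤ (1 - p) * (1 + 3 * p) := by nlinarith
    have hs2 : s * s = (1 - p) * (1 + 3 * p) := Real.mul_self_sqrt hfac
    have hs_pos : 0 < s := Real.sqrt_pos.mpr (by nlinarith)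
    set X : Matrix (Fin N) (Fin N) ℂ := op v v - op u u with hXdef
    have hXh : Xᴴ = X := by
      rw [hXdef, Matrix.conjTranspose_sub, conjTranspose_op, conjTranspose_op]
    have hX2 : X * X = (p:ℂ) • op v v + op u u - (p:ℂ) • op u v - (p:ℂ) • op v u := by
      rw [hXdef]
      simp only [Matrix.sub_mul, Matrix.mul_sub, op_mul_op, hvv, hq, hvu, huu, one_smul]
      module
    set T : Matrix (Fin N) (Fin N) ℂ :=
      ((1:ℂ) + p) • (op v v + op u u) - ((2:ℂ) * p) • (op u v + op v u) with hTdef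
    have hTT : T * T = (((1 - p) * (1 + 3 * p) : ℝ) : ℂ) • (X * X) := by
      rw [hTdef, hX2]
      simp only [Matrix.add_mul, Matrix.mul_add, Matrix.sub_mul, Matrix.mul_sub,
        Matrix.smul_mul, Matrix.mul_smul, op_mul_op, hvv, hq, hvu, huu, smul_smul, one_smul]
      push_cast
      module
    have hT_herm : T.IsHermitian := by
      show Tᴴ = T
      rw [hTdef]
      simp only [Matrix.conjTranspose_sub, Matrix.conjTranspose_add, Matrix.conjTranspose_smul,
        conjTranspose_op, RCLike.star_def, map_add, _root_.map_one, _root_.map_mul,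
        Complex.conj_ofReal, map_ofNat]
      module
    have hT_psd : T.PosSemidef := by
      refine Matrix.PosSemidef.of_dotProduct_mulVec_nonneg hT_herm fun x => ?_
      have hxv : star x ⬝ᵥ v = (starRingEnd ℂ) (star v ⬝ᵥ x) := star_dot_comm v x
      have hxu : star x ⬝ᵥ u = (starRingEnd ℂ) (star u ⬝ᵥ x) := star_dot_comm u x
      have hcalc : star x ⬝ᵥ T *ᵥ x
          = (1 + (p:ℂ)) * ((starRingEnd ℂ) (star v ⬝ᵥ x) * (star v ⬝ᵥ x)
              + (starRingEnd ℂ) (star u ⬝ᵥ x) * (star u ⬝ᵥ x))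
            - 2 * p * ((starRingEnd ℂ) (star u ⬝ᵥ x) * (star v ⬝ᵥ x)
              + (starRingEnd ℂ) (star v ⬝ᵥ x) * (star u ⬝ᵥ x)) := by
        rw [hTdef]
        simp only [Matrix.add_mulVec, Matrix.sub_mulVec, Matrix.smul_mulVec, op_mulVec,
          dotProduct_smul, dotProduct_add, dotProduct_sub, smul_eq_mul,
          hxv, hxu]
        ring
      rw [hcalc]
      exact quad_nonneg p hp0 hp1 (star v ⬝ᵥ x) (star u ⬝ᵥ x)
    set S : Matrix (Fin N) (Fin N) ℂ := ((s⁻¹ : ℝ) : ℂ) • T with hSdef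
    have hS_psd : S.PosSemidef := by
      refine Matrix.PosSemidef.of_dotProduct_mulVec_nonneg ?_ fun x => ?_
      · show Sᴴ = S
        rw [hSdef, Matrix.conjTranspose_smul, RCLike.star_def, Complex.conj_ofReal, hT_psd.1]
      · rw [hSdef, Matrix.smul_mulVec, dotProduct_smul, smul_eq_mul]
        exact mul_nonneg (Complex.zero_le_real.mpr (by positivity)) (hT_psd.dotProduct_mulVec_nonneg x)
    have hscal : ((s⁻¹ : ℝ) : ℂ) * ((s⁻¹ : ℝ) : ℂ) * (((1 - p) * (1 + 3 * p) : ℝ) : ℂ) = 1 := by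
      rw [← hs2]
      push_cast
      field_simp
    have hSS : S * S = Xᴴ * X := by
      rw [hXh, hSdef, Matrix.smul_mul, Matrix.mul_smul, smul_smul, hTT, smul_smul, hscal,
        one_smul]
    have htrT : T.trace = ((1:ℂ) + p) * ((p:ℂ) + 1) - ((2:ℂ) * p) * ((p:ℂ) + p) := by
      rw [hTdef]
      simp only [Matrix.trace_sub, Matrix.trace_add, Matrix.trace_smul, trace_op,
        hvv, huu, hvu, hq, smul_eq_mul]
    have htrS : S.trace = (s : ℂ) := by
      rw [hSdef, Matrix.trace_smul, htrT, smul_eq_mul]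
      have : ((1:ℂ) + p) * ((p:ℂ) + 1) - ((2:ℂ) * p) * ((p:ℂ) + p)
          = (((1 - p) * (1 + 3 * p) : ℝ) : ℂ) := by push_cast; ring
      rw [this, ← hs2]
      push_cast
      field_simp
    have htn : traceNorm (outer v - outer u) = s := by
      rw [houter, houter]
      show traceNorm X = s
      rw [traceNorm_eq_of X S hS_psd hSS, htrS, Complex.ofReal_re]
    constructor
    · rw [htn]
    · rw [traceDist, htn]
      have h4 : s ≤ 2 * Real.sqrt (1 - p) := by
        have h1 : (1 - p) * (1 + 3 * p) ≤ (1 - p) * 4 := by nlinarith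
        have h2 : s ≤ Real.sqrt ((1 - p) * 4) := Real.sqrt_le_sqrt h1
        have h3 : Real.sqrt ((1 - p) * 4) = Real.sqrt (1 - p) * 2 := by
          rw [Real.sqrt_mul (by linarith), show (4:ℝ) = 2^2 by norm_num,
            Real.sqrt_sq (by norm_num : (0:ℝ) ≤ 2)]
        linarith
      linarith

end
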